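/- Let N ≥ 3 and let W : (0,∞) → [0,∞) be nondecreasing. Then for every continuously differentiable function U : (0,∞) → ℝ with compact support contained in (0,∞), one has ((N−2)/2)² ∫₀^∞ U(r)² · r^{N−3} · W(r) dr ≤ ∫₀^∞ U'(r)² · r^{N−1} · W(r) dr. -/

import Mathlib

open MeasureTheory Set Filter Topology Function

lemma hardy_aux (g V : ℝ → ℝ) (hg : ContDiff ℝ 1 g) (hgs : HasCompactSupport g)
    (hg0 : ∀ x, 0 ≤ g x) (hV : Monotone V) (C : ℝ) (hVb : ∀ x, |V x| ≤ C) :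
    ∫ x, deriv g x * V x ≤ 0 := by
  have hgc : Continuous g := hg.continuous
  have hVm : Measurable V := hV.measurable
  have hC : 0 ≤ C := le_trans (abs_nonneg _) (hVb 0)
  obtain ⟨R, hR⟩ := hgs.isBounded.subset_closedBall 0
  have hRs : tsupport g ⊆ Icc (-R) R := by
    intro x hx
    have := hR hx
    rw [Real.closedBall_eq_Icc] at this
    simpa using this
  obtain ⟨L, hL⟩ := hgs.deriv.exists_bound_of_continuous (hg.continuous_deriv le_rfl)
  set K : NNReal := ⟨max L 0, le_max_right _ _⟩ with hKdef
  have hlip : LipschitzWith K g := by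
    apply lipschitzWith_of_nnnorm_deriv_le (hg.differentiable one_ne_zero)
    intro x
    rw [← NNReal.coe_le_coe]
    exact le_trans (hL x) (le_max_left _ _)
  set h : ℕ → ℝ := fun n => ((n : ℝ) + 1)⁻¹ with hhdef
  have hhpos : ∀ n, 0 < h n := fun n => by positivity
  have hh1 : ∀ n, h n ≤ 1 := by
    intro n
    rw [hhdef]
    simp only []
    rw [inv_le_one_iff₀]
    right; linarith [Nat.cast_nonneg (α := ℝ) n]
  -- integrability
  have hgint : Integrable g := hgc.integrable_of_hasCompactSupport hgs
  have hint1 : ∀ a : ℝ, Integrable (fun x => g (x + a) * V x) := by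
    intro a
    have h1 : Integrable (fun x => g (x + a)) := by
      apply Continuous.integrable_of_hasCompactSupport (hgc.comp (continuous_add_right a))
      exact hgs.comp_homeomorph (Homeomorph.addRight a)
    simpa [mul_comm] using h1.bdd_mul (c := C) hVm.aestronglyMeasurable (Eventually.of_forall fun x => by simpa using hVb x)
  have hint2 : ∀ a : ℝ, Integrable (fun x => g x * V (x - a)) := by
    intro a
    have hm : AEStronglyMeasurable (fun x => V (x - a)) (volume : Measure ℝ) :=
      (hVm.comp (measurable_id.sub measurable_const)).aestronglyMeasurable
    simpa [mul_comm] using hgint.bdd_mul (c := C) hm (Eventually.of_forall fun x => by simpa using hVb _)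
  have hintV : Integrable (fun x => g x * V x) := by simpa using hint1 0
  set F : ℕ → ℝ → ℝ := fun n x => ((n : ℝ) + 1) * (g (x + h n) - g x) * V x with hFdef
  -- each integral nonpositive
  have hFnonpos : ∀ n, ∫ x, F n x ≤ 0 := by
    intro n
    have key : (∫ x, g (x + h n) * V x) = ∫ x, g x * V (x - h n) := by
      have := integral_add_right_eq_self (μ := volume) (fun y => g y * V (y - h n)) (h n)
      simpa [add_sub_cancel_right] using this
    have e1 : ∫ x, F n x = ((n : ℝ) + 1) * ∫ x, (g (x + h n) - g x) * V x := by
      rw [← integral_const_mul]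
      congr 1; funext x; rw [hFdef]; ring
    have e2 : ∫ x, (g (x + h n) - g x) * V x
        = (∫ x, g (x + h n) * V x) - ∫ x, g x * V x := by
      rw [← integral_sub (hint1 (h n)) hintV]
      congr 1; funext x; ring
    have e3 : (∫ x, g x * V (x - h n)) - (∫ x, g x * V x)
        = ∫ x, g x * (V (x - h n) - V x) := by
      rw [← integral_sub (hint2 (h n)) hintV]
      congr 1; funext x; ring
    have e4 : ∫ x, g x * (V (x - h n) - V x) ≤ 0 := by
      apply integral_nonpos
      intro x
      have hmon : V (x - h n) ≤ V x := hV (by linarith [hhpos n])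
      exact mul_nonpos_iff.2 (Or.inl ⟨hg0 x, by linarith⟩)
    rw [e1, e2, key, e3]
    have hn0 : (0:ℝ) ≤ (n : ℝ) + 1 := by positivity
    exact mul_nonpos_iff.2 (Or.inl ⟨hn0, e4⟩)
  -- measurability
  have hFmeas : ∀ n, AEStronglyMeasurable (F n) (volume : Measure ℝ) := by
    intro n
    exact ((continuous_const.mul ((hgc.comp (continuous_add_right (h n))).sub
      hgc)).measurable.mul hVm).aestronglyMeasurable
  -- bound
  set bnd : ℝ → ℝ := indicator (Icc (-R - 1) (R + 1)) (fun _ => (K : ℝ) * C) with hbnd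
  have hbnd_int : Integrable bnd := by
    rw [hbnd, integrable_indicator_iff measurableSet_Icc]
    exact integrableOn_const measure_Icc_lt_top.ne
  have h_bound : ∀ n, ∀ᵐ x : ℝ, ‖F n x‖ ≤ bnd x := by
    intro n
    filter_upwards with x
    by_cases hx : x ∈ Icc (-R - 1) (R + 1)
    · rw [hbnd, indicator_of_mem hx]
      have hlb : |g (x + h n) - g x| ≤ (K : ℝ) * h n := by
        have := hlip.dist_le_mul (x + h n) x
        rw [Real.dist_eq, Real.dist_eq] at this
        simpa [abs_of_nonneg (hhpos n).le] using this
      have hn0 : (0:ℝ) ≤ (n : ℝ) + 1 := by positivity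
      calc ‖F n x‖ = ((n : ℝ) + 1) * |g (x + h n) - g x| * |V x| := by
            rw [hFdef, Real.norm_eq_abs, abs_mul, abs_mul, abs_of_nonneg hn0]
        _ ≤ ((n : ℝ) + 1) * ((K : ℝ) * h n) * C := by
            apply mul_le_mul _ (hVb x) (abs_nonneg _)
            · positivity
            · exact mul_le_mul_of_nonneg_left hlb hn0
        _ = (K : ℝ) * C := by
            rw [hhdef]
            field_simp
    · rw [hbnd, indicator_of_notMem hx]
      have hx1 : g x = 0 := by
        apply image_eq_zero_of_notMem_tsupport
        intro hmem
        have := hRs hmem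
        exact hx ⟨by linarith [this.1], by linarith [this.2]⟩
      have hx2 : g (x + h n) = 0 := by
        apply image_eq_zero_of_notMem_tsupport
        intro hmem
        have h2 := hRs hmem
        exact hx ⟨by linarith [h2.1, hhpos n, hh1 n], by linarith [h2.2, hhpos n, hh1 n]⟩
      simp [hFdef, hx1, hx2]
  -- limit
  have h_lim : ∀ᵐ x : ℝ, Tendsto (fun n => F n x) atTop (𝓝 (deriv g x * V x)) := by
    filter_upwards with x
    have hd := (hg.differentiable one_ne_zero x).hasDerivAt.tendsto_slope_zero
    have hseq : Tendsto h atTop (𝓝[≠] (0:ℝ)) := by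
      apply tendsto_nhdsWithin_of_tendsto_nhds_of_eventually_within
      · have := tendsto_one_div_add_atTop_nhds_zero_nat (𝕜 := ℝ)
        simpa [hhdef, one_div] using this
      · exact Eventually.of_forall fun n => (hhpos n).ne'
    have hcomp := (hd.comp hseq).mul_const (V x)
    have : (fun n => F n x) =
        (fun n => ((fun t => t⁻¹ • (g (x + t) - g x)) (h n)) * V x) := by
      funext n
      rw [hFdef]
      simp only [smul_eq_mul, hhdef, inv_inv]
    rw [this]
    exact hcomp
  have htend := tendsto_integral_of_dominated_convergence bnd hFmeas hbnd_int h_bound h_lim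
  exact le_of_tendsto htend (Eventually.of_forall hFnonpos)
theorem stmt_16 (N : ℕ) (hN : 3 ≤ N) (W : ℝ → ℝ)
    (hW0 : ∀ r : ℝ, 0 < r → 0 ≤ W r)
    (hWmono : MonotoneOn W (Set.Ioi 0))
    (U : ℝ → ℝ) (hU : ContDiff ℝ 1 U) (hsupp : HasCompactSupport U)
    (hsupp0 : tsupport U ⊆ Set.Ioi 0) :
    (((N : ℝ) - 2) / 2) ^ 2 *
        ∫ r in Set.Ioi (0:ℝ), (U r) ^ 2 * r ^ (N - 3) * W r ≤
      ∫ r in Set.Ioi (0:ℝ), (deriv U r) ^ 2 * r ^ (N - 1) * W r := by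
  classical
  obtain ⟨a, b, ha, hab, hK⟩ : ∃ a b : ℝ, 0 < a ∧ a ≤ b ∧ tsupport U ⊆ Icc a b := by
    rcases eq_empty_or_nonempty (tsupport U) with he | hne
    · exact ⟨1, 1, one_pos, le_rfl, by simp [he]⟩
    · have hc : IsCompact (tsupport U) := hsupp
      have h1 : sInf (tsupport U) ∈ tsupport U := hc.sInf_mem hne
      refine ⟨sInf (tsupport U), sSup (tsupport U), hsupp0 h1, ?_, fun x hx => ⟨?_, ?_⟩⟩
      · exact csInf_le_csSup hne hc.bddBelow hc.bddAbove
      · exact csInf_le hc.bddBelow hx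
      · exact le_csSup hc.bddAbove hx
  set V : ℝ → ℝ := fun x => W (min (max x a) b) with hVdef
  have hclamp : ∀ x : ℝ, min (max x a) b ∈ Icc a b := fun x =>
    ⟨le_min (le_max_right x a) hab, min_le_right _ _⟩
  have hIccIoi : Icc a b ⊆ Ioi (0:ℝ) := fun x hx => lt_of_lt_of_le ha hx.1
  have hVmono : Monotone V := by
    intro x y hxy
    exact hWmono (hIccIoi (hclamp x)) (hIccIoi (hclamp y))
      (min_le_min (max_le_max hxy le_rfl) le_rfl)
  have hV0 : ∀ x, 0 ≤ V x := fun x => hW0 _ (hIccIoi (hclamp x))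
  have hVleC : ∀ x, |V x| ≤ W b := fun x => by
    rw [abs_of_nonneg (hV0 x)]
    exact hWmono (hIccIoi (hclamp x)) (hIccIoi ⟨hab, le_rfl⟩) (hclamp x).2
  have hVeq : ∀ r ∈ Icc a b, V r = W r := by
    intro r hr
    rw [hVdef]
    simp only [max_eq_left hr.1, min_eq_left hr.2]
  have hUz : ∀ r, r ∉ Icc a b → U r = 0 ∧ deriv U r = 0 := by
    intro r hr
    have hr' : r ∉ tsupport U := fun h => hr (hK h)
    refine ⟨image_eq_zero_of_notMem_tsupport hr', ?_⟩
    by_contra h0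
    exact hr' (support_deriv_subset (Function.mem_support.2 h0))
  -- replacing W by V in integrals
  have hcongr : ∀ G : ℝ → ℝ, (∀ r, r ∉ Icc a b → G r = 0) →
      ∫ r in Ioi (0:ℝ), G r * W r = ∫ r in Ioi (0:ℝ), G r * V r := by
    intro G hG
    apply setIntegral_congr_fun measurableSet_Ioi
    intro r _
    by_cases h : r ∈ Icc a b
    · simp only [hVeq r h]
    · simp only [hG r h, zero_mul]
  have hUc : Continuous U := hU.continuous
  have hU'c : Continuous (deriv U) := hU.continuous_deriv le_rfl
  have hUdiff : Differentiable ℝ U := hU.differentiable one_ne_zero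
  -- integrability
  have hIntV : ∀ G : ℝ → ℝ, Continuous G → (Function.support G ⊆ tsupport U) →
      Integrable (fun r => G r * V r) := by
    intro G hGc hGs
    have hGint : Integrable G := hGc.integrable_of_hasCompactSupport (hsupp.mono' hGs)
    simpa [mul_comm] using hGint.bdd_mul (c := W b) hVmono.measurable.aestronglyMeasurable
      (Eventually.of_forall fun x => by simpa using hVleC x)
  have hs1 : Function.support (fun r : ℝ => U r ^ 2 * r ^ (N - 3)) ⊆ tsupport U := by
    intro r hr
    apply subset_closure
    intro h0
    exact hr (by simp [h0])
  have hs2 : Function.support (fun r : ℝ => deriv U r ^ 2 * r ^ (N - 1)) ⊆ tsupport U := by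
    intro r hr
    apply support_deriv_subset
    intro h0
    exact hr (by simp [h0])
  have hs3 : Function.support (fun r : ℝ => U r * deriv U r * r ^ (N - 2)) ⊆ tsupport U := by
    intro r hr
    apply subset_closure
    intro h0
    exact hr (by simp [h0])
  have hi1 : Integrable (fun r => (U r ^ 2 * r ^ (N - 3)) * V r) :=
    hIntV _ ((hUc.pow 2).mul (continuous_pow _)) hs1
  have hi2 : Integrable (fun r => (deriv U r ^ 2 * r ^ (N - 1)) * V r) :=
    hIntV _ ((hU'c.pow 2).mul (continuous_pow _)) hs2
  have hi3 : Integrable (fun r => (U r * deriv U r * r ^ (N - 2)) * V r) :=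
    hIntV _ ((hUc.mul hU'c).mul (continuous_pow _)) hs3
  -- the auxiliary function g
  set g : ℝ → ℝ := fun r => U r ^ 2 * r ^ (N - 2) with hgdef
  have hgC1 : ContDiff ℝ 1 g := (hU.pow 2).mul ((contDiff_id (𝕜 := ℝ)).pow (N - 2))
  have hgsupp : HasCompactSupport g := by
    apply hsupp.mono'
    intro r hr
    apply subset_closure
    intro h0
    exact hr (by simp [hgdef, h0])
  have hg0 : ∀ r, 0 ≤ g r := by
    intro r
    by_cases h : U r = 0
    · simp [hgdef, h]
    · have hr : r ∈ tsupport U := subset_closure h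
      have hrpos : (0:ℝ) < r := hsupp0 hr
      have : (0:ℝ) ≤ r ^ (N - 2) := pow_nonneg hrpos.le _
      rw [hgdef]
      positivity
  have hgderiv : ∀ r, deriv g r =
      2 * (U r * deriv U r * r ^ (N - 2)) + ((N : ℝ) - 2) * (U r ^ 2 * r ^ (N - 3)) := by
    intro r
    have h1 : HasDerivAt U (deriv U r) r := (hUdiff r).hasDerivAt
    have h2 : HasDerivAt (fun x : ℝ => U x ^ 2) (2 * U r * deriv U r) r := by
      simpa using h1.fun_pow 2
    have h3 : HasDerivAt (fun x : ℝ => x ^ (N - 2)) (((N:ℝ) - 2) * r ^ (N - 3)) r := by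
      have := hasDerivAt_pow (N - 2) r
      have hcast : ((N - 2 : ℕ) : ℝ) = (N : ℝ) - 2 := by
        rw [Nat.cast_sub (by omega : 2 ≤ N)]; norm_num
      have hexp : N - 2 - 1 = N - 3 := by omega
      rw [hexp, hcast] at this
      exact this
    have hd := (h2.fun_mul h3).deriv
    rw [hgdef]
    rw [hd]
    ring
  have hgz : ∀ r, r ∉ Icc a b → deriv g r = 0 := by
    intro r hr
    rw [hgderiv r, (hUz r hr).1, (hUz r hr).2]
    ring
  -- the key inequality from hardy_aux
  set c : ℝ := ((N : ℝ) - 2) / 2 with hcdef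
  have hc : 0 < c := by
    rw [hcdef]
    have : (3:ℝ) ≤ (N:ℝ) := by exact_mod_cast hN
    linarith
  set D : ℝ := ∫ r in Ioi (0:ℝ), (U r * deriv U r * r ^ (N - 2)) * V r with hDdef
  set A : ℝ := ∫ r in Ioi (0:ℝ), (U r ^ 2 * r ^ (N - 3)) * V r with hAdef
  set B : ℝ := ∫ r in Ioi (0:ℝ), (deriv U r ^ 2 * r ^ (N - 1)) * V r with hBdef
  have key : 2 * D + ((N : ℝ) - 2) * A ≤ 0 := by
    have h0 := hardy_aux g V hgC1 hgsupp hg0 hVmono (W b) hVleC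
    have hcompl : ∀ x, x ∉ Ioi (0:ℝ) → deriv g x * V x = 0 := by
      intro x hx
      have : x ∉ Icc a b := by
        intro hmem
        exact hx (hIccIoi hmem)
      rw [hgz x this, zero_mul]
    rw [← setIntegral_eq_integral_of_forall_compl_eq_zero hcompl] at h0
    have hsplit : ∫ x in Ioi (0:ℝ), deriv g x * V x
        = 2 * D + ((N : ℝ) - 2) * A := by
      rw [hDdef, hAdef, ← integral_const_mul, ← integral_const_mul,
        ← integral_add ((hi3.const_mul 2).integrableOn) ((hi1.const_mul _).integrableOn)]
      apply setIntegral_congr_fun measurableSet_Ioi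
      intro r _
      simp only [hgderiv]
      ring
    rw [hsplit] at h0
    exact h0
  -- pointwise AM-GM and integral comparison
  have hmono2 : ∫ r in Ioi (0:ℝ), -(2 * c * ((U r * deriv U r * r ^ (N - 2)) * V r))
      ≤ ∫ r in Ioi (0:ℝ),
        (c ^ 2 * ((U r ^ 2 * r ^ (N - 3)) * V r) + (deriv U r ^ 2 * r ^ (N - 1)) * V r) := by
    apply setIntegral_mono_on
    · have h' := (hi3.const_mul (2 * c)).neg
      exact (h'.congr (Filter.EventuallyEq.of_eq (by
        funext r
        simp only [Pi.neg_apply]))).integrableOn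
    · exact ((hi1.const_mul (c ^ 2)).add hi2).integrableOn
    · exact measurableSet_Ioi
    · intro r hr
      have hrpos : (0:ℝ) < r := hr
      have hq : (0:ℝ) < r ^ (N - 1) := pow_pos hrpos _
      have hexp : r ^ (N - 2) * r ^ (N - 2) = r ^ (N - 3) * r ^ (N - 1) := by
        rw [← pow_add, ← pow_add]
        congr 1
        omega
      have hsq : (c * U r * r ^ (N - 2) + deriv U r * r ^ (N - 1)) ^ 2
          = r ^ (N - 1) * (c ^ 2 * (U r) ^ 2 * r ^ (N - 3) + (deriv U r) ^ 2 * r ^ (N - 1)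
            + 2 * c * (U r * deriv U r * r ^ (N - 2))) := by
        linear_combination (c ^ 2 * (U r) ^ 2) * hexp
      have ht : 0 ≤ c ^ 2 * (U r) ^ 2 * r ^ (N - 3) + (deriv U r) ^ 2 * r ^ (N - 1)
          + 2 * c * (U r * deriv U r * r ^ (N - 2)) := by
        have hs := sq_nonneg (c * U r * r ^ (N - 2) + deriv U r * r ^ (N - 1))
        rw [hsq] at hs
        exact nonneg_of_mul_nonneg_right hs hq
      nlinarith [mul_nonneg ht (hV0 r)]
  -- compute both sides of hmono2
  have hlhs : ∫ r in Ioi (0:ℝ), -(2 * c * ((U r * deriv U r * r ^ (N - 2)) * V r))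
      = -(2 * c * D) := by
    rw [hDdef, ← integral_const_mul, ← integral_neg]
  have hrhs : ∫ r in Ioi (0:ℝ),
      (c ^ 2 * ((U r ^ 2 * r ^ (N - 3)) * V r) + (deriv U r ^ 2 * r ^ (N - 1)) * V r)
      = c ^ 2 * A + B := by
    rw [hAdef, hBdef, ← integral_const_mul,
      ← integral_add ((hi1.const_mul (c ^ 2)).integrableOn) hi2.integrableOn]
  rw [hlhs, hrhs] at hmono2
  -- conclude
  have hN2 : (N : ℝ) - 2 = 2 * c := by rw [hcdef]; ring
  rw [hN2] at key
  have hfinal : c ^ 2 * A ≤ B := by nlinarith [mul_le_mul_of_nonneg_left key hc.le]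
  -- rewrite goal with V
  have e1 : ∫ r in Ioi (0:ℝ), U r ^ 2 * r ^ (N - 3) * W r = A := by
    rw [hAdef]
    exact hcongr _ (fun r hr => by rw [(hUz r hr).1]; ring)
  have e2 : ∫ r in Ioi (0:ℝ), deriv U r ^ 2 * r ^ (N - 1) * W r = B := by
    rw [hBdef]
    exact hcongr _ (fun r hr => by rw [(hUz r hr).2]; ring)
  calc (((N : ℝ) - 2) / 2) ^ 2 * ∫ r in Ioi (0:ℝ), U r ^ 2 * r ^ (N - 3) * W r
      = c ^ 2 * A := by rw [e1, hcdef]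
    _ ≤ B := hfinal
    _ = _ := e2.symm
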